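/- Let A₁, A₂, A₃ be 2×2 Hermitian complex matrices with zero trace such that A(p) := p₁A₁ + p₂A₂ + p₃A₃ is invertible for every p ∈ ℝ³ \ {0}. Let G = (g^{αβ}) be the (positive definite, real symmetric) Gram matrix of the quadratic form q(p) := −det A(p), and let (g_{αβ}) := G⁻¹. Then the number c := −(i/2)·√(det(g_{αβ}))·tr(A₁A₂A₃) is a real number and c = 1 or c = −1; equivalently, (tr(A₁A₂A₃))² = −4·det G. -/

import Mathlib

open Matrix

private lemma repr_aux (A : Fin 3 → Matrix (Fin 2) (Fin 2) ℂ)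
    (hHerm : ∀ α, (A α).IsHermitian) (hTr : ∀ α, (A α).trace = 0) (α : Fin 3) :
    ∃ a b c : ℝ, A α = !![(a:ℂ), b + c*Complex.I; b - c*Complex.I, -(a:ℂ)] := by
  have h := (hHerm α).apply
  have ht := hTr α
  rw [Matrix.trace_fin_two] at ht
  refine ⟨(A α 0 0).re, (A α 0 1).re, (A α 0 1).im, ?_⟩
  set a := (A α 0 0).re with ha
  set b := (A α 0 1).re with hb
  set c := (A α 0 1).im with hc
  have h00 : A α 0 0 = (a : ℂ) := by
    have := h 0 0
    rw [Complex.ext_iff] at this ⊢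
    simp [ha] at this ⊢
    linarith
  have h01 : A α 0 1 = (b:ℂ) + (c:ℂ)*Complex.I := (Complex.re_add_im _).symm
  have h10 : A α 1 0 = (b:ℂ) - (c:ℂ)*Complex.I := by
    rw [← h 1 0, Complex.ext_iff]
    simp [hb, hc]
  have h11 : A α 1 1 = -(a:ℂ) := by linear_combination ht - h00
  rw [Matrix.eta_fin_two (A α), h00, h01, h10, h11]

private lemma trace_aux (a0 b0 c0 a1 b1 c1 a2 b2 c2 : ℝ) :
    (!![(a0:ℂ), b0+c0*Complex.I; b0-c0*Complex.I, -(a0:ℂ)]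
      * !![(a1:ℂ), b1+c1*Complex.I; b1-c1*Complex.I, -(a1:ℂ)]
      * !![(a2:ℂ), b2+c2*Complex.I; b2-c2*Complex.I, -(a2:ℂ)]).trace
    = 2*Complex.I*((-(a0*(b1*c2-c1*b2) - b0*(a1*c2-c1*a2) + c0*(a1*b2-b1*a2)) : ℝ) : ℂ) := by
  rw [Matrix.trace_fin_two]
  simp [Matrix.mul_apply, Fin.sum_univ_two]
  apply Complex.ext <;> simp [pow_two, Complex.mul_re, Complex.mul_im] <;> ring

private lemma det_aux (p : Fin 3 → ℝ) (a0 b0 c0 a1 b1 c1 a2 b2 c2 : ℝ) :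
    -((p 0:ℂ) • !![(a0:ℂ), b0+c0*Complex.I; b0-c0*Complex.I, -(a0:ℂ)]
      + (p 1:ℂ) • !![(a1:ℂ), b1+c1*Complex.I; b1-c1*Complex.I, -(a1:ℂ)]
      + (p 2:ℂ) • !![(a2:ℂ), b2+c2*Complex.I; b2-c2*Complex.I, -(a2:ℂ)]).det
    = (((p 0*a0+p 1*a1+p 2*a2)^2 + (p 0*b0+p 1*b1+p 2*b2)^2 + (p 0*c0+p 1*c1+p 2*c2)^2 : ℝ) : ℂ) := by
  rw [Matrix.det_fin_two]
  simp [Matrix.add_apply, Matrix.smul_apply]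
  apply Complex.ext <;> simp [pow_two, Complex.mul_re, Complex.mul_im] <;> ring

theorem topological_charge_is_plus_minus_one
    (A : Fin 3 → Matrix (Fin 2) (Fin 2) ℂ)
    (hHerm : ∀ α, (A α).IsHermitian) (hTr : ∀ α, (A α).trace = 0)
    (hell : ∀ p : Fin 3 → ℝ, p ≠ 0 → IsUnit (∑ α, (p α : ℂ) • A α))
    (G : Matrix (Fin 3) (Fin 3) ℝ) (hGsymm : G.IsSymm) (hGpos : G.PosDef)
    (hG : ∀ p : Fin 3 → ℝ,
      -(∑ α, (p α : ℂ) • A α).det = ((∑ α, ∑ β, G α β * p α * p β : ℝ) : ℂ)) :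
    (-(Complex.I / 2) * (Real.sqrt (G⁻¹).det : ℂ) * (A 0 * A 1 * A 2).trace = 1 ∨
      -(Complex.I / 2) * (Real.sqrt (G⁻¹).det : ℂ) * (A 0 * A 1 * A 2).trace = -1) ∧
    ((A 0 * A 1 * A 2).trace) ^ 2 = -4 * (G.det : ℂ) := by
  obtain ⟨a0, b0, c0, hA0⟩ := repr_aux A hHerm hTr 0
  obtain ⟨a1, b1, c1, hA1⟩ := repr_aux A hHerm hTr 1
  obtain ⟨a2, b2, c2, hA2⟩ := repr_aux A hHerm hTr 2
  set m : ℝ := -(a0*(b1*c2-c1*b2) - b0*(a1*c2-c1*a2) + c0*(a1*b2-b1*a2)) with hm_def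
  have htrace : (A 0 * A 1 * A 2).trace = 2*Complex.I*(m:ℂ) := by
    rw [hA0, hA1, hA2, trace_aux]
  -- symmetry of G
  have hs : ∀ i j, G j i = G i j := by
    intro i j
    have := congrFun (congrFun hGsymm i) j
    simpa using this
  -- the quadratic form identity over ℝ
  have hq : ∀ p : Fin 3 → ℝ, ∑ α, ∑ β, G α β * p α * p β
      = (p 0*a0+p 1*a1+p 2*a2)^2 + (p 0*b0+p 1*b1+p 2*b2)^2 + (p 0*c0+p 1*c1+p 2*c2)^2 := by
    intro p
    have h := hG p
    rw [Fin.sum_univ_three, hA0, hA1, hA2] at h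
    have h2 := (det_aux p a0 b0 c0 a1 b1 c1 a2 b2 c2).symm.trans h
    exact_mod_cast h2.symm
  -- entries of G
  have e00 : G 0 0 = a0^2+b0^2+c0^2 := by
    have := hq ![1,0,0]; simp [Fin.sum_univ_three] at this; linarith
  have e11 : G 1 1 = a1^2+b1^2+c1^2 := by
    have := hq ![0,1,0]; simp [Fin.sum_univ_three] at this; linarith
  have e22 : G 2 2 = a2^2+b2^2+c2^2 := by
    have := hq ![0,0,1]; simp [Fin.sum_univ_three] at this; linarith
  have e01 : G 0 1 = a0*a1+b0*b1+c0*c1 := by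
    have h := hq ![1,1,0]; simp [Fin.sum_univ_three] at h
    linear_combination (h - e00 - e11 + hs 1 0) / 2
  have e02 : G 0 2 = a0*a2+b0*b2+c0*c2 := by
    have h := hq ![1,0,1]; simp [Fin.sum_univ_three] at h
    linear_combination (h - e00 - e22 + hs 2 0) / 2
  have e12 : G 1 2 = a1*a2+b1*b2+c1*c2 := by
    have h := hq ![0,1,1]; simp [Fin.sum_univ_three] at h
    linear_combination (h - e11 - e22 + hs 2 1) / 2
  have hdetG : G.det = m^2 := by
    rw [Matrix.det_fin_three, hs 0 1, hs 0 2, hs 1 2, e00, e11, e22, e01, e02, e12, hm_def]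
    ring
  have hm : m ≠ 0 := by
    intro h
    have := hGpos.det_pos
    rw [hdetG, h] at this
    simp at this
  have hsqrt : Real.sqrt ((G⁻¹).det) = |m|⁻¹ := by
    have : (G⁻¹).det = (m^2)⁻¹ := by
      rw [Matrix.det_nonsing_inv, Ring.inverse_eq_inv', hdetG]
    rw [this, Real.sqrt_inv, Real.sqrt_sq_eq_abs]
  constructor
  · rw [htrace, hsqrt]
    have key : -(Complex.I/2) * ((|m|⁻¹ : ℝ):ℂ) * (2*Complex.I*(m:ℂ)) = ((|m|⁻¹*m : ℝ):ℂ) := by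
      push_cast
      linear_combination (-((|m|:ℝ):ℂ)⁻¹*(m:ℂ)) * Complex.I_sq
    rw [key]
    rcases lt_or_gt_of_ne hm with hneg | hpos
    · right
      rw [abs_of_neg hneg]
      norm_cast
      field_simp
      norm_num [Int.cast_negSucc]
    · left
      rw [abs_of_pos hpos]
      norm_cast
      field_simp
  · rw [htrace, hdetG]
    push_cast
    linear_combination (4*(m:ℂ)^2) * Complex.I_sq
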